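/- Let T = (S, Σ, κ) be a stochastic transition system, B ∈ Σ, and μ an initial probability distribution on (S, Σ). If T is decisive with respect to B, then lim_{n→∞} (p^Yes_n + p^No_n) = 1, where p^Yes_n = Prob_μ(F^{≤n} B) and p^No_n = Prob_μ((S ∖ B) U^{≤n} B̃). -/

import Mathlib

open MeasureTheory ProbabilityTheory Filter Set ENNReal

namespace STS

variable {S : Type*} [MeasurableSpace S]

/-- The finite-dimensional distributions of the Markov chain with initial distribution `μ`
and transition kernel `κ`: `finDist κ μ n` is the joint law of the first `n+1` states. -/
noncomputable def finDist (κ : Kernel S S) (μ : Measure S) : (n : ℕ) → Measure (Fin (n + 1) → S)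
  | 0 => μ.map (fun s => fun _ => s)
  | n + 1 => (finDist κ μ n).bind (fun x => (κ (x (Fin.last n))).map (Fin.snoc x))

/-- `P` assigns to each initial probability distribution `μ` the probability measure `Prob_μ`
on the space of runs `ℕ → S` (given by the Ionescu–Tulcea theorem), i.e. the unique probability
measure under which the coordinate process is a Markov chain with initial distribution `μ` and
transition kernel `κ`.  This is characterized by the finite-dimensional distributions. -/
def IsMarkovMeasureFamily (κ : Kernel S S) (P : Measure S → Measure (ℕ → S)) : Prop :=
  ∀ μ : Measure S, IsProbabilityMeasure μ →
    IsProbabilityMeasure (P μ) ∧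
    ∀ n : ℕ, (P μ).map (fun ω (i : Fin (n + 1)) => ω i.1) = finDist κ μ n

/-- `F B`: the set of runs that visit `B` at some point. -/
def FEv (B : Set S) : Set (ℕ → S) := {ω | ∃ k, ω k ∈ B}

/-- `F^{≤n} B`: the set of runs that visit `B` within `n` steps. -/
def FLe (n : ℕ) (B : Set S) : Set (ℕ → S) := {ω | ∃ k ≤ n, ω k ∈ B}

/-- `B' U B`: runs that stay in `B'` until a first visit to `B`. -/
def Until (B' B : Set S) : Set (ℕ → S) := {ω | ∃ k, ω k ∈ B ∧ ∀ j < k, ω j ∈ B'}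

/-- `B' U^{≤n} B`: runs that stay in `B'` until a first visit to `B`, within `n` steps. -/
def UntilLe (n : ℕ) (B' B : Set S) : Set (ℕ → S) :=
  {ω | ∃ k ≤ n, ω k ∈ B ∧ ∀ j < k, ω j ∈ B'}

/-- `G B`: runs that always stay in `B`. -/
def Glob (B : Set S) : Set (ℕ → S) := {ω | ∀ k, ω k ∈ B}

/-- `GF B`: runs that visit `B` infinitely often. -/
def GlobFEv (B : Set S) : Set (ℕ → S) := {ω | ∀ n : ℕ, ∃ k ≥ n, ω k ∈ B}

/-- The avoid-set `B̃` of `B`: states from which `B` is reached with probability `0`. -/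
def avoidSet (P : Measure S → Measure (ℕ → S)) (B : Set S) : Set S :=
  {s : S | P (Measure.dirac s) (FEv B) = 0}

/-- The STS is decisive w.r.t. `B`: from any initial distribution, almost surely either `B` or
its avoid-set `B̃` is eventually visited. -/
def Decisive (P : Measure S → Measure (ℕ → S)) (B : Set S) : Prop :=
  ∀ μ : Measure S, IsProbabilityMeasure μ → P μ (FEv B ∪ FEv (avoidSet P B)) = 1

/-- `A` is an attractor: it is reached almost surely from any initial distribution. -/
def IsAttractor (P : Measure S → Measure (ℕ → S)) (A : Set S) : Prop :=
  ∀ μ : Measure S, IsProbabilityMeasure μ → P μ (FEv A) = 1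



-- measurability of snoc-type maps
lemma measurable_snoc_pair (n : ℕ) :
    Measurable (fun p : (Fin (n + 1) → S) × S => (Fin.snoc p.1 p.2 : Fin (n + 2) → S)) := by
  apply measurable_pi_lambda
  intro i
  refine Fin.lastCases ?_ ?_ i
  · simp only [Fin.snoc_last]; exact measurable_snd
  · intro j; simp only [Fin.snoc_castSucc]
    exact (measurable_pi_apply j).comp measurable_fst

lemma measurable_snoc_right (n : ℕ) (x : Fin (n + 1) → S) :
    Measurable (fun s : S => (Fin.snoc x s : Fin (n + 2) → S)) :=
  (measurable_snoc_pair n).comp (measurable_const.prodMk measurable_id)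

lemma measurable_step (κ : Kernel S S) [IsMarkovKernel κ] (n : ℕ) :
    Measurable (fun x : Fin (n + 1) → S => ((κ (x (Fin.last n))).map (Fin.snoc x) : Measure (Fin (n + 2) → S))) := by
  apply Measure.measurable_of_measurable_coe
  intro A hA
  have h1 : ∀ x : Fin (n + 1) → S, ((κ (x (Fin.last n))).map (Fin.snoc x)) A
      = (κ.comap (fun x : Fin (n+1) → S => x (Fin.last n)) (measurable_pi_apply _)) x
        (Prod.mk x ⁻¹' ((fun p : (Fin (n + 1) → S) × S => (Fin.snoc p.1 p.2 : Fin (n+2) → S)) ⁻¹' A)) := by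
    intro x
    rw [Measure.map_apply (measurable_snoc_right n x) hA, Kernel.comap_apply]
    rfl
  simp only [h1]
  exact Kernel.measurable_kernel_prodMk_left ((measurable_snoc_pair n) hA)

variable (κ : Kernel S S) [IsMarkovKernel κ]

lemma lintegral_finDist_succ (μ : Measure S) (n : ℕ)
    {f : (Fin (n + 2) → S) → ℝ≥0∞} (hf : Measurable f) :
    ∫⁻ x, f x ∂ finDist κ μ (n + 1)
      = ∫⁻ x, ∫⁻ s, f (Fin.snoc x s) ∂ κ (x (Fin.last n)) ∂ finDist κ μ n := by
  rw [show finDist κ μ (n+1)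
      = (finDist κ μ n).bind (fun x => (κ (x (Fin.last n))).map (Fin.snoc x)) from rfl,
    Measure.lintegral_bind (measurable_step κ n).aemeasurable hf.aemeasurable]
  congr 1
  ext x
  rw [lintegral_map hf (measurable_snoc_right n x)]

noncomputable def Kfun (g : S → ℝ≥0∞) : S → ℝ≥0∞ := fun s => ∫⁻ t, g t ∂ κ s

lemma measurable_Kfun {g : S → ℝ≥0∞} (hg : Measurable g) : Measurable (Kfun κ g) :=
  Measurable.lintegral_kernel_prod_right' (κ := κ) (hg.comp measurable_snd)

noncomputable def Kiter : ℕ → (S → ℝ≥0∞) → (S → ℝ≥0∞)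
  | 0, g => g
  | m + 1, g => Kiter m (Kfun κ g)

lemma measurable_Kiter : ∀ (m : ℕ) {g : S → ℝ≥0∞}, Measurable g → Measurable (Kiter κ m g)
  | 0, _, hg => hg
  | m + 1, _, hg => measurable_Kiter m (measurable_Kfun κ hg)

lemma lintegral_last_finDist (ν : Measure S) :
    ∀ (m : ℕ) {g : S → ℝ≥0∞}, Measurable g →
      ∫⁻ x, g (x (Fin.last m)) ∂ finDist κ ν m = ∫⁻ s, Kiter κ m g s ∂ ν := by
  intro m
  induction m with
  | zero =>
    intro g hg
    rw [show finDist κ ν 0 = ν.map (fun s => fun _ => s) from rfl]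
    rw [lintegral_map (f := fun x : Fin 1 → S => g (x (Fin.last 0)))
      (g := fun s (_ : Fin 1) => s)
      (hg.comp (measurable_pi_apply _)) (measurable_pi_lambda _ fun _ => measurable_id)]
    rfl
  | succ m ih =>
    intro g hg
    rw [lintegral_finDist_succ κ ν m (f := fun x => g (x (Fin.last (m+1))))
      (hg.comp (measurable_pi_apply _))]
    simp only [Fin.snoc_last]
    exact ih (measurable_Kfun κ hg)

lemma lintegral_two_coord (μ : Measure S) (a : ℕ)
    {h : S → ℝ≥0∞} (hh : Measurable h) (hfin : ∀ s, h s ≠ ∞) :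
    ∀ (m : ℕ) {g : S → ℝ≥0∞}, Measurable g →
      ∫⁻ x, h (x ⟨a, by omega⟩) * g (x (Fin.last (a + m))) ∂ finDist κ μ (a + m)
        = ∫⁻ x, h (x (Fin.last a)) * Kiter κ m g (x (Fin.last a)) ∂ finDist κ μ a := by
  intro m
  induction m with
  | zero =>
    intro g hg
    rfl
  | succ m ih =>
    intro g hg
    have hmeas : Measurable fun x : Fin (a + m + 2) → S =>
        h (x ⟨a, by omega⟩) * g (x (Fin.last (a + m + 1))) :=
      ((hh.comp (measurable_pi_apply _)).mul (hg.comp (measurable_pi_apply _)))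
    show (∫⁻ x : Fin (a + m + 1 + 1) → S,
        h (x ⟨a, by omega⟩) * g (x (Fin.last (a + m + 1))) ∂ finDist κ μ (a + m + 1)) = _
    rw [lintegral_finDist_succ κ μ (a + m) hmeas]
    have key : ∀ x : Fin (a + m + 1) → S,
        ∫⁻ s, h ((Fin.snoc x s : Fin (a+m+2) → S) ⟨a, by omega⟩)
          * g ((Fin.snoc x s : Fin (a+m+2) → S) (Fin.last (a + m + 1))) ∂ κ (x (Fin.last (a + m)))
        = h (x ⟨a, by omega⟩) * Kfun κ g (x (Fin.last (a + m))) := by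
      intro x
      have e1 : ∀ s : S, (Fin.snoc x s : Fin (a+m+2) → S) ⟨a, by omega⟩ = x ⟨a, by omega⟩ := by
        intro s
        have : (⟨a, by omega⟩ : Fin (a+m+2)) = Fin.castSucc ⟨a, by omega⟩ := rfl
        rw [this, Fin.snoc_castSucc]
      simp only [e1, Fin.snoc_last]
      exact lintegral_const_mul' _ _ (hfin _)
    simp only [key]
    exact ih (measurable_Kfun κ hg)


lemma measurable_proj (n : ℕ) : Measurable (fun (ω : ℕ → S) (i : Fin (n + 1)) => ω i.1) :=
  measurable_pi_lambda _ fun i => measurable_pi_apply _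

lemma measurable_finDist_dirac (n : ℕ) :
    Measurable (fun s : S => finDist κ (Measure.dirac s) n) := by
  induction n with
  | zero =>
    exact (Measure.measurable_map _
      (measurable_pi_lambda _ fun _ => measurable_id)).comp Measure.measurable_dirac
  | succ n ih => exact (Measure.measurable_bind' (measurable_step κ n)).comp ih

lemma measurableSet_cylEx {B : Set S} (hB : MeasurableSet B) (n : ℕ) :
    MeasurableSet {x : Fin (n + 1) → S | ∃ i, x i ∈ B} := by
  have : {x : Fin (n + 1) → S | ∃ i, x i ∈ B} = ⋃ i : Fin (n + 1), (fun x => x i) ⁻¹' B := by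
    ext x; simp
  rw [this]
  exact MeasurableSet.iUnion fun i => (measurable_pi_apply i) hB

lemma measurable_avoidSet (P : Measure S → Measure (ℕ → S)) (hP : IsMarkovMeasureFamily κ P)
    {B : Set S} (hB : MeasurableSet B) : MeasurableSet (avoidSet P B) := by
  have key : ∀ s : S, P (Measure.dirac s) (FEv B)
      = ⨆ n, finDist κ (Measure.dirac s) n {x | ∃ i, x i ∈ B} := by
    intro s
    obtain ⟨hprob, hmap⟩ := hP (Measure.dirac s) inferInstance
    have hFE : FEv B = ⋃ n, FLe n B := by
      ext ω
      constructor
      · rintro ⟨k, hk⟩; exact mem_iUnion.2 ⟨k, k, le_rfl, hk⟩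
      · rintro h; obtain ⟨n, k, _, hk⟩ := mem_iUnion.1 h; exact ⟨k, hk⟩
    have hmono : Monotone (fun n => FLe n B) :=
      fun p q hpq ω hω => by obtain ⟨k, hk, hkB⟩ := hω; exact ⟨k, hk.trans hpq, hkB⟩
    rw [hFE, hmono.measure_iUnion]
    congr 1
    ext n
    have hset : FLe n B = (fun ω (i : Fin (n + 1)) => ω i.1) ⁻¹' {x | ∃ i, x i ∈ B} := by
      ext ω
      constructor
      · rintro ⟨k, hk, hkB⟩; exact ⟨⟨k, Nat.lt_succ_of_le hk⟩, hkB⟩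
      · rintro ⟨i, hi⟩; exact ⟨i.1, Nat.lt_succ_iff.1 i.2, hi⟩
    rw [hset, ← Measure.map_apply (measurable_proj n)
      (measurableSet_cylEx hB n), hmap n]
  have hset : avoidSet P B
      = (fun s : S => ⨆ n, finDist κ (Measure.dirac s) n {x | ∃ i, x i ∈ B}) ⁻¹' {0} := by
    ext s
    simp only [avoidSet, mem_setOf_eq, mem_preimage, mem_singleton_iff, key s]
  rw [hset]
  exact (Measurable.iSup fun n =>
    (Measure.measurable_coe (measurableSet_cylEx hB n)).comp (measurable_finDist_dirac κ n))
    (measurableSet_singleton 0)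

lemma Kiter_indicator_eq_zero (P : Measure S → Measure (ℕ → S)) (hP : IsMarkovMeasureFamily κ P)
    {B : Set S} (hB : MeasurableSet B) {s : S} (hs : s ∈ avoidSet P B) (m : ℕ) :
    Kiter κ m (B.indicator (1 : S → ℝ≥0∞)) s = 0 := by
  obtain ⟨hprob, hmap⟩ := hP (Measure.dirac s) inferInstance
  have hmi : Measurable (B.indicator (1 : S → ℝ≥0∞)) := measurable_one.indicator hB
  have h1 : Kiter κ m (B.indicator (1 : S → ℝ≥0∞)) s
      = ∫⁻ t, Kiter κ m (B.indicator (1 : S → ℝ≥0∞)) t ∂ (Measure.dirac s) :=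
    (lintegral_dirac' _ (measurable_Kiter κ m hmi)).symm
  rw [h1, ← lintegral_last_finDist κ _ m hmi]
  have heq : (fun x : Fin (m + 1) → S => B.indicator (1 : S → ℝ≥0∞) (x (Fin.last m)))
      = Set.indicator ((fun x : Fin (m + 1) → S => x (Fin.last m)) ⁻¹' B) 1 := by
    ext x
    by_cases hx : x (Fin.last m) ∈ B <;> simp [Set.indicator, hx]
  rw [heq, lintegral_indicator_one ((measurable_pi_apply _) hB),
    ← hmap m, Measure.map_apply (measurable_proj m) ((measurable_pi_apply _) hB)]
  have hsub : ((fun (ω : ℕ → S) (i : Fin (m + 1)) => ω i.1)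
      ⁻¹' ((fun x : Fin (m + 1) → S => x (Fin.last m)) ⁻¹' B)) ⊆ FEv B := by
    intro ω hω; exact ⟨m, hω⟩
  exact le_antisymm (hs ▸ measure_mono hsub) zero_le

lemma meas_two_coord_zero (P : Measure S → Measure (ℕ → S)) (hP : IsMarkovMeasureFamily κ P)
    {B : Set S} (hB : MeasurableSet B) (μ : Measure S) (hμ : IsProbabilityMeasure μ)
    (a m : ℕ) :
    P μ {ω : ℕ → S | ω a ∈ avoidSet P B ∧ ω (a + m) ∈ B} = 0 := by
  obtain ⟨hprob, hmap⟩ := hP μ hμ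
  have hA : MeasurableSet (avoidSet P B) := measurable_avoidSet κ P hP hB
  set E : Set (Fin (a + m + 1) → S) :=
    {x | x ⟨a, by omega⟩ ∈ avoidSet P B ∧ x (Fin.last (a + m)) ∈ B} with hE
  have hEm : MeasurableSet E := by
    have : E = (fun x : Fin (a + m + 1) → S => x ⟨a, by omega⟩) ⁻¹' avoidSet P B
        ∩ (fun x : Fin (a + m + 1) → S => x (Fin.last (a + m))) ⁻¹' B := rfl
    rw [this]
    exact ((measurable_pi_apply _) hA).inter ((measurable_pi_apply _) hB)
  have hpre : {ω : ℕ → S | ω a ∈ avoidSet P B ∧ ω (a + m) ∈ B}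
      = (fun ω (i : Fin (a + m + 1)) => ω i.1) ⁻¹' E := rfl
  rw [hpre, ← Measure.map_apply (measurable_proj (a + m)) hEm,
    hmap (a + m)]
  have hind : (finDist κ μ (a + m)) E
      = ∫⁻ x, ((avoidSet P B).indicator (1 : S → ℝ≥0∞) (x ⟨a, by omega⟩))
      * (B.indicator (1 : S → ℝ≥0∞) (x (Fin.last (a + m)))) ∂ finDist κ μ (a + m) := by
    have heq : (fun x : Fin (a + m + 1) → S =>
        ((avoidSet P B).indicator (1 : S → ℝ≥0∞) (x ⟨a, by omega⟩))
        * (B.indicator (1 : S → ℝ≥0∞) (x (Fin.last (a + m))))) = E.indicator 1 := by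
      ext x
      by_cases h1 : x ⟨a, by omega⟩ ∈ avoidSet P B <;>
        by_cases h2 : x (Fin.last (a + m)) ∈ B <;>
        simp [Set.indicator, hE, h1, h2]
    rw [heq, lintegral_indicator_one hEm]
  rw [hind, lintegral_two_coord κ μ a (measurable_one.indicator hA)
    (fun s => by by_cases h : s ∈ avoidSet P B <;> simp [Set.indicator, h]) m
    (measurable_one.indicator hB)]
  have hzero : ∀ x : Fin (a + 1) → S, (avoidSet P B).indicator 1 (x (Fin.last a))
      * Kiter κ m (B.indicator 1) (x (Fin.last a)) = 0 := by
    intro x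
    by_cases h : x (Fin.last a) ∈ avoidSet P B
    · rw [Kiter_indicator_eq_zero κ P hP hB h m, mul_zero]
    · simp [Set.indicator, h]
  simp only [hzero, lintegral_zero]

/-- If the STS is decisive w.r.t. `B`, then `p^Yes_n + p^No_n → 1`. -/
theorem decisive_pYes_add_pNo_tendsto_one
    (κ : Kernel S S) [IsMarkovKernel κ]
    (P : Measure S → Measure (ℕ → S)) (hP : IsMarkovMeasureFamily κ P)
    (B : Set S) (hB : MeasurableSet B)
    (μ : Measure S) (hμ : IsProbabilityMeasure μ)
    (hdec : Decisive P B) :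
    Tendsto (fun n => P μ (FLe n B) + P μ (UntilLe n Bᶜ (avoidSet P B))) atTop (nhds 1) := by
  obtain ⟨hprob, hmap⟩ := hP μ hμ
  haveI := hprob
  set Av := avoidSet P B with hAdef
  have hA : MeasurableSet Av := measurable_avoidSet κ P hP hB
  have hFLe : ∀ n, MeasurableSet (FLe n B) := by
    intro n
    have : FLe n B = ⋃ k, ⋃ _ : k ≤ n, (fun ω : ℕ → S => ω k) ⁻¹' B := by
      ext ω; simp [FLe]
    rw [this]
    exact .iUnion fun k => .iUnion fun _ => (measurable_pi_apply k) hB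
  have hULe : ∀ n, MeasurableSet (UntilLe n Bᶜ Av) := by
    intro n
    have : UntilLe n Bᶜ Av = ⋃ k, ⋃ _ : k ≤ n,
        ((fun ω : ℕ → S => ω k) ⁻¹' Av ∩ ⋂ j, ⋂ _ : j < k, (fun ω : ℕ → S => ω j) ⁻¹' Bᶜ) := by
      ext ω; simp [UntilLe]; tauto
    rw [this]
    exact .iUnion fun k => .iUnion fun _ => (((measurable_pi_apply k) hA).inter
      (.iInter fun j => .iInter fun _ => (measurable_pi_apply j) hB.compl))
  have hmono : Monotone (fun n => FLe n B ∪ UntilLe n Bᶜ Av) := by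
    intro p q hpq ω hω
    rcases hω with h | h
    · obtain ⟨k, hk, hkB⟩ := h; exact Or.inl ⟨k, hk.trans hpq, hkB⟩
    · obtain ⟨k, hk, hkB, hj⟩ := h; exact Or.inr ⟨k, hk.trans hpq, hkB, hj⟩
  have hunion : (⋃ n, FLe n B ∪ UntilLe n Bᶜ Av) = FEv B ∪ Until Bᶜ Av := by
    ext ω
    simp only [mem_iUnion, mem_union]
    constructor
    · rintro ⟨n, h | h⟩
      · obtain ⟨k, _, hkB⟩ := h; exact Or.inl ⟨k, hkB⟩
      · obtain ⟨k, _, hkB, hj⟩ := h; exact Or.inr ⟨k, hkB, hj⟩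
    · rintro (⟨k, hkB⟩ | ⟨k, hkB, hj⟩)
      · exact ⟨k, Or.inl ⟨k, le_rfl, hkB⟩⟩
      · exact ⟨k, Or.inr ⟨k, le_rfl, hkB, hj⟩⟩
  have h1 : P μ (FEv B ∪ Until Bᶜ Av) = 1 := by
    apply le_antisymm prob_le_one
    rw [← hdec μ hμ]
    apply measure_mono
    intro ω hω
    rcases hω with h | h
    · exact Or.inl h
    · obtain ⟨k, hk⟩ := h
      by_cases hEB : ∃ j, ω j ∈ B
      · exact Or.inl hEB
      · push_neg at hEB
        exact Or.inr ⟨k, hk, fun j _ => hEB j⟩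
  have hT : Tendsto (fun n => P μ (FLe n B ∪ UntilLe n Bᶜ Av)) atTop (nhds 1) := by
    have := tendsto_measure_iUnion_atTop (μ := P μ) hmono
    rwa [hunion, h1] at this
  have hzero : ∀ n, P μ (FLe n B ∩ UntilLe n Bᶜ Av) = 0 := by
    intro n
    have hsub : FLe n B ∩ UntilLe n Bᶜ Av
        ⊆ ⋃ a : ℕ, ⋃ m : ℕ, {ω : ℕ → S | ω a ∈ Av ∧ ω (a + m) ∈ B} := by
      rintro ω ⟨⟨k, hk, hkB⟩, ⟨k', hk', hk'A, hj⟩⟩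
      have hkk : k' ≤ k := by
        by_contra hlt
        push_neg at hlt
        exact (hj k hlt) hkB
      refine mem_iUnion.2 ⟨k', mem_iUnion.2 ⟨k - k', ⟨hk'A, ?_⟩⟩⟩
      rwa [Nat.add_sub_cancel' hkk]
    refine le_antisymm ?_ zero_le
    calc P μ (FLe n B ∩ UntilLe n Bᶜ Av)
        ≤ P μ (⋃ a : ℕ, ⋃ m : ℕ, {ω : ℕ → S | ω a ∈ Av ∧ ω (a + m) ∈ B}) := measure_mono hsub
      _ = 0 := by
        refine measure_iUnion_null fun a => measure_iUnion_null fun m => ?_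
        exact meas_two_coord_zero κ P hP hB μ hμ a m
  have heq : ∀ n, P μ (FLe n B) + P μ (UntilLe n Bᶜ Av)
      = P μ (FLe n B ∪ UntilLe n Bᶜ Av) := by
    intro n
    rw [← measure_union_add_inter (FLe n B) (hULe n), hzero n, add_zero]
  simpa only [heq] using hT


end STS
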